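/- Let μ > 0, let k be a nonzero integer, let t ≥ 0, and let g ∈ L²(ℝ, ℂ). Then (∫_ℝ |g(η)|² · exp(−2μ·∫₀ᵗ (η − k·s)² ds) dη)^{1/2} ≤ e^{1/12} · exp(−(1/12)·μ^{1/3}·|k|^{2/3}·t) · ‖g‖_{L²(ℝ)}. -/

import Mathlib

open MeasureTheory intervalIntegral

/-- Fourier-side decay estimate for the k-th mode of the linearized temperature equation:
for `μ > 0`, a nonzero integer `k`, `t ≥ 0` and `g ∈ L²(ℝ, ℂ)`,
`(∫ |g(η)|² exp(−2μ∫₀ᵗ(η − ks)² ds) dη)^{1/2}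
  ≤ e^{1/12} · exp(−(1/12)μ^{1/3}|k|^{2/3}t) · ‖g‖_{L²}`. -/
theorem stmt3 (μ : ℝ) (hμ : 0 < μ) (k : ℤ) (hk : k ≠ 0) (t : ℝ) (ht : 0 ≤ t)
    (g : ℝ → ℂ) (hg : MemLp g 2 (volume : Measure ℝ)) :
    (∫ η : ℝ, ‖g η‖ ^ 2 *
        Real.exp (-(2 * μ) * ∫ s in (0 : ℝ)..t, (η - (k : ℝ) * s) ^ 2)) ^ ((1 : ℝ) / 2)
      ≤ Real.exp (1 / 12) *
          Real.exp (-(1 / 12) * μ ^ ((1 : ℝ) / 3) * |(k : ℝ)| ^ ((2 : ℝ) / 3) * t) *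
          (∫ η : ℝ, ‖g η‖ ^ 2) ^ ((1 : ℝ) / 2) := by
  -- compute the inner integral
  have hint : ∀ η : ℝ, (∫ s in (0 : ℝ)..t, (η - (k : ℝ) * s) ^ 2)
      = η ^ 2 * t - η * (k : ℝ) * t ^ 2 + (k : ℝ) ^ 2 * t ^ 3 / 3 := by
    intro η
    have hder : ∀ s : ℝ, HasDerivAt
        (fun u => η ^ 2 * u - η * (k : ℝ) * u ^ 2 + (k : ℝ) ^ 2 * u ^ 3 / 3)
        ((η - (k : ℝ) * s) ^ 2) s := by
      intro s
      have h1 : HasDerivAt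
          (fun u : ℝ => η ^ 2 * u - η * (k : ℝ) * u ^ 2 + (k : ℝ) ^ 2 * u ^ 3 / 3)
          (η ^ 2 * 1 - η * (k : ℝ) * (↑2 * s ^ (2 - 1) * 1)
            + (k : ℝ) ^ 2 * (↑3 * s ^ (3 - 1) * 1) / 3) s :=
        (((hasDerivAt_id s).const_mul _).sub
            (((hasDerivAt_id s).pow 2).const_mul _)).add
          ((((hasDerivAt_id s).pow 3).const_mul _).div_const 3)
      convert h1 using 1
      push_cast
      ring
    have hcont : IntervalIntegrable (fun s : ℝ => (η - (k : ℝ) * s) ^ 2) volume 0 t :=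
      (Continuous.pow (by continuity) 2).intervalIntegrable 0 t
    rw [intervalIntegral.integral_eq_sub_of_hasDerivAt (fun s _ => hder s) hcont]
    ring
  simp only [hint]
  set C : ℝ := Real.exp (-(μ * (k : ℝ) ^ 2 * t ^ 3 / 6)) with hC
  set f : ℝ → ℝ := fun η => ‖g η‖ ^ 2 *
      Real.exp (-(2 * μ) * (η ^ 2 * t - η * (k : ℝ) * t ^ 2 + (k : ℝ) ^ 2 * t ^ 3 / 3)) with hf
  have hpt : ∀ η : ℝ, f η ≤ C * ‖g η‖ ^ 2 := by
    intro η
    have hexp : Real.exp (-(2 * μ) * (η ^ 2 * t - η * (k : ℝ) * t ^ 2 + (k : ℝ) ^ 2 * t ^ 3 / 3))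
        ≤ C := by
      rw [hC, Real.exp_le_exp]
      nlinarith [mul_nonneg (mul_nonneg hμ.le ht) (sq_nonneg (η - (k : ℝ) * t / 2))]
    calc f η ≤ ‖g η‖ ^ 2 * C := mul_le_mul_of_nonneg_left hexp (sq_nonneg _)
      _ = C * ‖g η‖ ^ 2 := by ring
  have hg2 : Integrable (fun η : ℝ => ‖g η‖ ^ 2) volume := by
    have h := hg.integrable_norm_rpow (by norm_num) (by norm_num)
    refine h.congr (Filter.Eventually.of_forall fun x => ?_)
    norm_num
  have hCg : Integrable (fun η : ℝ => C * ‖g η‖ ^ 2) volume := hg2.const_mul C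
  have hfm : AEStronglyMeasurable f volume := by
    apply AEStronglyMeasurable.mul
    · exact (hg.aestronglyMeasurable.norm.pow 2)
    · exact (Continuous.aestronglyMeasurable (by continuity))
  have hfi : Integrable f volume := by
    refine hCg.mono hfm (Filter.Eventually.of_forall fun η => ?_)
    have h1 : 0 ≤ f η := mul_nonneg (sq_nonneg _) (Real.exp_pos _).le
    have h2 : 0 ≤ C * ‖g η‖ ^ 2 := mul_nonneg (Real.exp_pos _).le (sq_nonneg _)
    rw [Real.norm_of_nonneg h1, Real.norm_of_nonneg h2]
    exact hpt η
  have hIle : (∫ η : ℝ, f η) ≤ C * ∫ η : ℝ, ‖g η‖ ^ 2 := by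
    rw [← MeasureTheory.integral_const_mul]
    exact integral_mono hfi hCg hpt
  have h0 : 0 ≤ ∫ η : ℝ, f η :=
    integral_nonneg fun η => mul_nonneg (sq_nonneg _) (Real.exp_pos _).le
  have h0g : 0 ≤ ∫ η : ℝ, ‖g η‖ ^ 2 := integral_nonneg fun η => sq_nonneg _
  have hrp : (∫ η : ℝ, f η) ^ ((1 : ℝ) / 2)
      ≤ C ^ ((1 : ℝ) / 2) * (∫ η : ℝ, ‖g η‖ ^ 2) ^ ((1 : ℝ) / 2) := by
    rw [← Real.mul_rpow (Real.exp_pos _).le h0g]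
    exact Real.rpow_le_rpow h0 hIle (by norm_num)
  have hChalf : C ^ ((1 : ℝ) / 2) = Real.exp (-(μ * (k : ℝ) ^ 2 * t ^ 3 / 12)) := by
    rw [hC, ← Real.exp_mul]
    ring_nf
  -- final comparison of exponents
  set a : ℝ := μ ^ ((1 : ℝ) / 3) * |(k : ℝ)| ^ ((2 : ℝ) / 3) * t with ha
  have ha0 : 0 ≤ a := by
    apply mul_nonneg (mul_nonneg (Real.rpow_nonneg hμ.le _) (Real.rpow_nonneg (abs_nonneg _) _)) ht
  have ha3 : a ^ 3 = μ * (k : ℝ) ^ 2 * t ^ 3 := by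
    rw [ha, mul_pow, mul_pow, ← Real.rpow_natCast (μ ^ ((1 : ℝ) / 3)) 3,
      ← Real.rpow_natCast (|(k : ℝ)| ^ ((2 : ℝ) / 3)) 3,
      ← Real.rpow_mul hμ.le, ← Real.rpow_mul (abs_nonneg _)]
    norm_num
  have hfinal : Real.exp (-(μ * (k : ℝ) ^ 2 * t ^ 3 / 12))
      ≤ Real.exp (1 / 12) *
        Real.exp (-(1 / 12) * μ ^ ((1 : ℝ) / 3) * |(k : ℝ)| ^ ((2 : ℝ) / 3) * t) := by
    rw [← Real.exp_add, Real.exp_le_exp]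
    have key : a ≤ 1 + a ^ 3 := by nlinarith [sq_nonneg (a - 1), sq_nonneg (a + 1), sq_nonneg a]
    have : -(1 / 12 : ℝ) * μ ^ ((1 : ℝ) / 3) * |(k : ℝ)| ^ ((2 : ℝ) / 3) * t = -(a / 12) := by
      rw [ha]; ring
    rw [this, ← ha3]
    linarith
  calc (∫ η : ℝ, f η) ^ ((1 : ℝ) / 2)
      ≤ C ^ ((1 : ℝ) / 2) * (∫ η : ℝ, ‖g η‖ ^ 2) ^ ((1 : ℝ) / 2) := hrp
    _ ≤ (Real.exp (1 / 12) *
          Real.exp (-(1 / 12) * μ ^ ((1 : ℝ) / 3) * |(k : ℝ)| ^ ((2 : ℝ) / 3) * t)) *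
        (∫ η : ℝ, ‖g η‖ ^ 2) ^ ((1 : ℝ) / 2) := by
        apply mul_le_mul_of_nonneg_right _ (Real.rpow_nonneg h0g _)
        rw [hChalf]; exact hfinal
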